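/- Let m ≥ 1, β ∈ ℝ, and let J be the m×m complex matrix with iβ on the diagonal and 1 on the superdiagonal (a Jordan block with eigenvalue iβ). Let S ⊆ ℂ^m × ℂ^m be the closure of {(w, e^{tJ}w) : w ∈ ℂ^m, t ∈ ℝ}. Then the set {0} ∪ {x ∈ ℂ^m : (x, 0) ∈ S} equals the linear subspace {x ∈ ℂ^m : x_j = 0 for all j > ⌊m/2⌋} (coordinates indexed 1,…,m in the Jordan basis). -/

import Mathlib

/-- The `m × m` complex Jordan block with `iβ` on the diagonal and `1` on the
superdiagonal. -/
noncomputable def jordanBlockI (m : ℕ) (β : ℝ) : Matrix (Fin m) (Fin m) ℂ :=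
  Matrix.of fun i j => if (i : ℕ) = (j : ℕ) then Complex.I * (β : ℂ)
    else if (i : ℕ) + 1 = (j : ℕ) then 1 else 0

/-- The closure of the set of pairs of points lying on a common orbit of `e^{tJ}`. -/
noncomputable def orbitPairClosure (m : ℕ) (β : ℝ) : Set ((Fin m → ℂ) × (Fin m → ℂ)) :=
  closure {q | ∃ (w : Fin m → ℂ) (t : ℝ),
    q = (w, (NormedSpace.exp (t • jordanBlockI m β)).mulVec w)}

namespace JordanY

open Finset Matrix

noncomputable def Nmat (m : ℕ) : Matrix (Fin m) (Fin m) ℂ :=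
  Matrix.of fun i j => if (i : ℕ) + 1 = (j : ℕ) then 1 else 0

theorem Nmat_apply (m : ℕ) (i j : Fin m) :
    Nmat m i j = if (i : ℕ) + 1 = (j : ℕ) then 1 else 0 := rfl

theorem Nmat_pow (m r : ℕ) (i j : Fin m) :
    (Nmat m ^ r) i j = if (i : ℕ) + r = (j : ℕ) then 1 else 0 := by
  induction r generalizing j with
  | zero =>
    simp [Matrix.one_apply, Fin.ext_iff]
  | succ r ih =>
    rw [pow_succ, Matrix.mul_apply]
    simp only [ih, Nmat_apply, ite_mul, one_mul, zero_mul]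
    by_cases h : (i : ℕ) + (r + 1) = (j : ℕ)
    · have hk : (i : ℕ) + r < m := by omega
      rw [Finset.sum_eq_single_of_mem ⟨(i : ℕ) + r, hk⟩ (Finset.mem_univ _)]
      · simp [show (i : ℕ) + r + 1 = (j : ℕ) by omega, h]
      · intro b _ hb
        have : ¬ ((i : ℕ) + r = (b : ℕ)) := by
          intro hc
          exact hb (by apply Fin.ext; simp [← hc])
        simp [this]
    · rw [Finset.sum_eq_zero, if_neg h]
      intro k _
      by_cases h1 : (i : ℕ) + r = (k : ℕ)
      · rw [if_pos h1, if_neg (by omega)]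
      · rw [if_neg h1]

theorem Nmat_pow_eq_zero (m : ℕ) : Nmat m ^ m = 0 := by
  ext i j
  rw [Nmat_pow]
  have : ¬ ((i : ℕ) + m = (j : ℕ)) := by omega
  simp [this]

/-- `e^{zN}` as a finite sum. -/
noncomputable def Nexp (m : ℕ) (z : ℂ) : Matrix (Fin m) (Fin m) ℂ :=
  ∑ r ∈ Finset.range m, (z ^ r / (r.factorial : ℂ)) • Nmat m ^ r

theorem Nexp_apply (m : ℕ) (z : ℂ) (i j : Fin m) :
    Nexp m z i j = if (i : ℕ) ≤ (j : ℕ) then z ^ ((j : ℕ) - (i : ℕ)) / (((j : ℕ) - (i : ℕ)).factorial : ℂ) else 0 := by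
  rw [Nexp, Matrix.sum_apply]
  simp only [Matrix.smul_apply, Nmat_pow, smul_ite, smul_zero, smul_eq_mul, mul_one]
  by_cases h : (i : ℕ) ≤ (j : ℕ)
  · rw [Finset.sum_eq_single_of_mem ((j : ℕ) - (i : ℕ)) (by simp; omega)]
    · rw [if_pos (by omega), if_pos h, mul_one]
    · intro b _ hb
      rw [if_neg (by omega), mul_zero]
  · rw [Finset.sum_eq_zero, if_neg h]
    intro k _
    rw [if_neg (by omega), mul_zero]

theorem exp_zsmul_Nmat (m : ℕ) (z : ℂ) :
    NormedSpace.exp (z • Nmat m) = Nexp m z := by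
  rw [NormedSpace.exp_eq_tsum ℝ]
  refine (tsum_eq_sum (s := Finset.range m) ?_).trans ?_
  · intro b hb
    rw [smul_pow]
    have hmb : m ≤ b := by simpa using hb
    have : Nmat m ^ b = 0 := by
      calc Nmat m ^ b = Nmat m ^ m * Nmat m ^ (b - m) := by rw [← pow_add]; congr 1; omega
      _ = 0 := by rw [Nmat_pow_eq_zero]; simp
    simp [this]
  · apply Finset.sum_congr rfl
    intro r _
    rw [smul_pow]
    ext i j
    simp [div_eq_mul_inv]
    ring

end JordanY

namespace Part2
open JordanY Matrix

theorem smul_jordan_eq (m : ℕ) (β t : ℝ) :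
    t • jordanBlockI m β
      = Matrix.diagonal (fun _ => Complex.I * (β : ℂ) * (t : ℝ)) + (t : ℂ) • Nmat m := by
  ext i j
  simp only [Matrix.smul_apply, Matrix.add_apply, Matrix.diagonal_apply, jordanBlockI,
    Matrix.of_apply, Nmat_apply, Fin.ext_iff]
  by_cases h : (i : ℕ) = (j : ℕ)
  · rw [if_pos h, if_pos h]
    have h1 : ¬ ((i : ℕ) + 1 = (j : ℕ)) := by omega
    rw [if_neg h1]
    simp [Complex.real_smul]
    ring
  · rw [if_neg h, if_neg h, smul_ite]
    by_cases h2 : (i : ℕ) + 1 = (j : ℕ)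
    · simp [h2, h, Complex.real_smul]
    · simp [h2, h]

theorem exp_smul_jordan (m : ℕ) (β t : ℝ) :
    NormedSpace.exp (t • jordanBlockI m β)
      = Complex.exp (Complex.I * β * t) • Nexp m (t : ℂ) := by
  rw [smul_jordan_eq, Matrix.exp_add_of_commute, Matrix.exp_diagonal, exp_zsmul_Nmat]
  · ext i j
    have hexp : NormedSpace.exp (Complex.I * (β : ℂ) * (t : ℝ)) = Complex.exp (Complex.I * β * t) := by
      rw [← Complex.exp_eq_exp_ℂ]
    simp [Matrix.diagonal_mul, hexp, Matrix.smul_apply, smul_eq_mul]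
  · rw [show Matrix.diagonal (fun _ : Fin m => Complex.I * (β : ℂ) * (t : ℝ))
        = Matrix.scalar (Fin m) (Complex.I * (β : ℂ) * (t : ℝ)) from (Matrix.scalar_apply _).symm]
    exact Matrix.scalar_commute _ (fun r => Commute.all _ r) _

theorem Nexp_eq_exp (m : ℕ) (t : ℝ) :
    Nexp m (t : ℂ) = NormedSpace.exp (t • jordanBlockI m 0) := by
  rw [exp_smul_jordan]
  simp

theorem Nexp_neg_mul_Nexp (m : ℕ) (t : ℝ) :
    Nexp m (-(t : ℂ)) * Nexp m (t : ℂ) = 1 := by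
  have h1 : Nexp m (-(t : ℂ)) = Nexp m ((-t : ℝ) : ℂ) := by push_cast; ring_nf
  rw [h1, Nexp_eq_exp, Nexp_eq_exp, ← Matrix.exp_add_of_commute]
  · rw [show (-t) • jordanBlockI m 0 + t • jordanBlockI m 0 = 0 by rw [← add_smul]; simp]
    exact NormedSpace.exp_zero
  · exact (Commute.refl (jordanBlockI m 0)).smul_left (-t) |>.smul_right t

end Part2

namespace Part3
open JordanY Part2 Matrix

def extc (m : ℕ) (x : Fin m → ℂ) (i : ℕ) : ℂ := if h : i < m then x ⟨i, h⟩ else 0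

theorem extc_of_ge {m i : ℕ} (x : Fin m → ℂ) (h : m ≤ i) : extc m x i = 0 := by
  rw [extc, dif_neg (by omega)]

theorem extc_lt {m i : ℕ} (x : Fin m → ℂ) (h : i < m) : extc m x i = x ⟨i, h⟩ := by
  rw [extc, dif_pos h]

theorem extc_zero (m : ℕ) (i : ℕ) : extc m (0 : Fin m → ℂ) i = 0 := by
  rw [extc]; split <;> simp

theorem extc_smul (m : ℕ) (a : ℂ) (x : Fin m → ℂ) (i : ℕ) :
    extc m (a • x) i = a * extc m x i := by
  rw [extc, extc]; split <;> simp

theorem extc_sum {γ : Type*} (m : ℕ) (s : Finset γ) (f : γ → Fin m → ℂ) (i : ℕ) :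
    extc m (∑ r ∈ s, f r) i = ∑ r ∈ s, extc m (f r) i := by
  rw [extc]
  split
  · simp only [Finset.sum_apply]
    exact Finset.sum_congr rfl fun r _ => (extc_lt _ _).symm
  · rw [Finset.sum_eq_zero]
    intro r _
    rw [extc_of_ge _ (by omega)]

theorem extc_mulVec_Nmat (m : ℕ) (u : Fin m → ℂ) (k : ℕ) :
    extc m ((Nmat m).mulVec u) k = extc m u (k + 1) := by
  by_cases hk : k < m
  · rw [extc_lt _ hk, Matrix.mulVec, dotProduct]
    simp only [Nmat_apply, Fin.val_mk, ite_mul, one_mul, zero_mul]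
    by_cases hk1 : k + 1 < m
    · rw [Finset.sum_eq_single_of_mem ⟨k + 1, hk1⟩ (Finset.mem_univ _), extc_lt _ hk1]
      · rw [if_pos rfl]
      · intro b _ hb
        rw [if_neg (fun hc => hb (Fin.ext (by simpa using hc.symm)))]
    · rw [Finset.sum_eq_zero, extc_of_ge _ (by omega)]
      intro b _
      rw [if_neg (by omega)]
  · rw [extc_of_ge _ (by omega), extc_of_ge _ (by omega)]

noncomputable def Bf (m c : ℕ) (u v : Fin m → ℂ) : ℂ :=
  ∑ k ∈ Finset.range (c + 1), (-1) ^ k * extc m u k * extc m v (c - k)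

theorem Bf_zero_right (m c : ℕ) (u : Fin m → ℂ) : Bf m c u 0 = 0 := by
  rw [Bf, Finset.sum_eq_zero]
  intro k _
  rw [extc_zero, mul_zero]

theorem Bf_smul_left (m c : ℕ) (a : ℂ) (u v : Fin m → ℂ) :
    Bf m c (a • u) v = a * Bf m c u v := by
  rw [Bf, Bf, Finset.mul_sum]
  exact Finset.sum_congr rfl fun k _ => by rw [extc_smul]; ring

theorem Bf_smul_right (m c : ℕ) (a : ℂ) (u v : Fin m → ℂ) :
    Bf m c u (a • v) = a * Bf m c u v := by
  rw [Bf, Bf, Finset.mul_sum]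
  exact Finset.sum_congr rfl fun k _ => by rw [extc_smul]; ring

theorem Bf_sum_left {γ : Type*} (m c : ℕ) (s : Finset γ) (f : γ → Fin m → ℂ) (v : Fin m → ℂ) :
    Bf m c (∑ r ∈ s, f r) v = ∑ r ∈ s, Bf m c (f r) v := by
  rw [Bf]
  have h : ∀ k ∈ Finset.range (c + 1),
      (-1) ^ k * extc m (∑ r ∈ s, f r) k * extc m v (c - k)
        = ∑ r ∈ s, (-1) ^ k * extc m (f r) k * extc m v (c - k) := by
    intro k _
    rw [extc_sum, Finset.mul_sum, Finset.sum_mul]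
  rw [Finset.sum_congr rfl h, Finset.sum_comm]
  rfl

theorem Bf_sum_right {γ : Type*} (m c : ℕ) (s : Finset γ) (f : γ → Fin m → ℂ) (v : Fin m → ℂ) :
    Bf m c v (∑ r ∈ s, f r) = ∑ r ∈ s, Bf m c v (f r) := by
  rw [Bf]
  have h : ∀ k ∈ Finset.range (c + 1),
      (-1) ^ k * extc m v k * extc m (∑ r ∈ s, f r) (c - k)
        = ∑ r ∈ s, (-1) ^ k * extc m v k * extc m (f r) (c - k) := by
    intro k _
    rw [extc_sum, Finset.mul_sum]
  rw [Finset.sum_congr rfl h, Finset.sum_comm]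
  rfl

theorem Bf_step (m c : ℕ) (hc : m ≤ c + 1) (u v : Fin m → ℂ) :
    Bf m c ((Nmat m).mulVec u) v + Bf m c u ((Nmat m).mulVec v) = 0 := by
  set F : ℕ → ℂ := fun k => (-1) ^ k * extc m u k * extc m v (c + 1 - k) with hF
  have h1 : Bf m c ((Nmat m).mulVec u) v = ∑ k ∈ Finset.range (c + 1), -F (k + 1) := by
    rw [Bf]
    refine Finset.sum_congr rfl fun k _ => ?_
    rw [extc_mulVec_Nmat, hF]
    simp only [Nat.succ_sub_succ]
    rw [pow_succ]
    ring
  have h2 : Bf m c u ((Nmat m).mulVec v) = ∑ k ∈ Finset.range (c + 1), F k := by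
    rw [Bf]
    refine Finset.sum_congr rfl fun k hk => ?_
    rw [extc_mulVec_Nmat, hF]
    have : c - k + 1 = c + 1 - k := by
      have := Finset.mem_range.mp hk; omega
    rw [this]
  have h3 : ∑ k ∈ Finset.range (c + 2), F k = (∑ k ∈ Finset.range (c + 1), F (k + 1)) + F 0 :=
    Finset.sum_range_succ' F (c + 1)
  have h4 : ∑ k ∈ Finset.range (c + 2), F k = (∑ k ∈ Finset.range (c + 1), F k) + F (c + 1) :=
    Finset.sum_range_succ F (c + 1)
  have hF0 : F 0 = 0 := by
    show (-1 : ℂ) ^ 0 * extc m u 0 * extc m v (c + 1 - 0) = 0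
    rw [extc_of_ge v (by omega), mul_zero]
  have hFc : F (c + 1) = 0 := by
    show (-1 : ℂ) ^ (c + 1) * extc m u (c + 1) * extc m v (c + 1 - (c + 1)) = 0
    rw [extc_of_ge u (by omega)]
    ring
  rw [h1, h2, Finset.sum_neg_distrib]
  have := h3.symm.trans h4
  rw [hF0, hFc, add_zero] at this
  rw [this]
  ring

theorem Bf_pow (m c : ℕ) (hc : m ≤ c + 1) (r : ℕ) (u v : Fin m → ℂ) :
    Bf m c ((Nmat m ^ r).mulVec u) v = (-1) ^ r * Bf m c u ((Nmat m ^ r).mulVec v) := by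
  induction r generalizing u v with
  | zero => simp [Matrix.one_mulVec]
  | succ r ih =>
    have e1 : (Nmat m ^ (r + 1)).mulVec u = (Nmat m ^ r).mulVec ((Nmat m).mulVec u) := by
      rw [Matrix.mulVec_mulVec, pow_succ]
    have e2 : (Nmat m ^ (r + 1)).mulVec v = (Nmat m).mulVec ((Nmat m ^ r).mulVec v) := by
      rw [Matrix.mulVec_mulVec, pow_succ']
    have hstep : Bf m c ((Nmat m).mulVec u) ((Nmat m ^ r).mulVec v)
        = -Bf m c u ((Nmat m).mulVec ((Nmat m ^ r).mulVec v)) := by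
      have h := Bf_step m c hc u ((Nmat m ^ r).mulVec v)
      linear_combination h
    rw [e1, ih, hstep, ← e2, pow_succ]
    ring

end Part3

namespace Part4
open JordanY Part2 Part3 Matrix

theorem sum_mulVec {γ : Type*} {m : ℕ} (s : Finset γ) (M : γ → Matrix (Fin m) (Fin m) ℂ)
    (v : Fin m → ℂ) : (∑ r ∈ s, M r).mulVec v = ∑ r ∈ s, (M r).mulVec v := by
  ext i
  simp only [Matrix.mulVec, dotProduct, Matrix.sum_apply, Finset.sum_apply,
    Finset.sum_mul]
  exact Finset.sum_comm

theorem Bf_Nexp_left (m c : ℕ) (hc : m ≤ c + 1) (z : ℂ) (u v : Fin m → ℂ) :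
    Bf m c ((Nexp m z).mulVec u) v = Bf m c u ((Nexp m (-z)).mulVec v) := by
  rw [Nexp, Nexp, sum_mulVec, sum_mulVec, Bf_sum_left, Bf_sum_right]
  refine Finset.sum_congr rfl fun r _ => ?_
  rw [Matrix.smul_mulVec, Matrix.smul_mulVec, Bf_smul_left, Bf_smul_right,
    Bf_pow m c hc r, neg_pow]
  ring

theorem Bf_Nexp_inv (m c : ℕ) (hc : m ≤ c + 1) (t : ℝ) (u v : Fin m → ℂ) :
    Bf m c ((Nexp m (t : ℂ)).mulVec u) ((Nexp m (t : ℂ)).mulVec v) = Bf m c u v := by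
  rw [Bf_Nexp_left m c hc, Matrix.mulVec_mulVec, Nexp_neg_mul_Nexp, Matrix.one_mulVec]

theorem Bf_exp_abs (m c : ℕ) (hc : m ≤ c + 1) (β t : ℝ) (w : Fin m → ℂ) :
    ‖Bf m c ((NormedSpace.exp (t • jordanBlockI m β)).mulVec w)
      ((NormedSpace.exp (t • jordanBlockI m β)).mulVec w)‖ = ‖Bf m c w w‖ := by
  rw [exp_smul_jordan, Matrix.smul_mulVec, Bf_smul_left, Bf_smul_right,
    Bf_Nexp_inv m c hc]
  rw [norm_mul, norm_mul, Complex.norm_exp]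
  simp

end Part4


namespace Part5
open JordanY Part2 Part3 Part4 Matrix

theorem continuous_extc (m k : ℕ) : Continuous fun u : Fin m → ℂ => extc m u k := by
  by_cases h : k < m
  · have : (fun u : Fin m → ℂ => extc m u k) = fun u => u ⟨k, h⟩ :=
      funext fun u => extc_lt u h
    rw [this]; exact continuous_apply _
  · have : (fun u : Fin m → ℂ => extc m u k) = fun _ => 0 :=
      funext fun u => extc_of_ge u (by omega)
    rw [this]; exact continuous_const

theorem continuous_Bf (m c : ℕ) :
    Continuous fun z : (Fin m → ℂ) × (Fin m → ℂ) => Bf m c z.1 z.2 := by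
  unfold Bf
  apply continuous_finset_sum
  intro k _
  exact (continuous_const.mul ((continuous_extc m k).comp continuous_fst)).mul
    ((continuous_extc m (c - k)).comp continuous_snd)

set_option maxHeartbeats 1000000 in
theorem Bf_self_zero_of_mem (m c : ℕ) (hc : m ≤ c + 1) (β : ℝ) (x : Fin m → ℂ)
    (hx : (x, (0 : Fin m → ℂ)) ∈ orbitPairClosure m β) : Bf m c x x = 0 := by
  set f : (Fin m → ℂ) × (Fin m → ℂ) → ℝ :=
    fun z => ‖Bf m c z.1 z.1‖ - ‖Bf m c z.2 z.2‖ with hf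
  have hc1 : Continuous fun z : (Fin m → ℂ) × (Fin m → ℂ) => Bf m c z.1 z.1 :=
    (continuous_Bf m c).comp (continuous_fst.prodMk continuous_fst)
  have hc2 : Continuous fun z : (Fin m → ℂ) × (Fin m → ℂ) => Bf m c z.2 z.2 :=
    (continuous_Bf m c).comp (continuous_snd.prodMk continuous_snd)
  have hcont : Continuous f :=
    (continuous_norm.comp hc1).sub (continuous_norm.comp hc2)
  have hsub : {q : (Fin m → ℂ) × (Fin m → ℂ) | ∃ (w : Fin m → ℂ) (t : ℝ),
      q = (w, (NormedSpace.exp (t • jordanBlockI m β)).mulVec w)} ⊆ f ⁻¹' {0} := by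
    rintro q ⟨w, t, rfl⟩
    simp only [Set.mem_preimage, Set.mem_singleton_iff, hf]
    rw [Bf_exp_abs m c hc, sub_self]
  have hcl : orbitPairClosure m β ⊆ f ⁻¹' {0} :=
    closure_minimal hsub (isClosed_singleton.preimage hcont)
  have hfx : f (x, 0) = 0 := hcl hx
  simp only [hf] at hfx
  rw [Bf_zero_right, norm_zero, sub_zero] at hfx
  exact norm_eq_zero.mp hfx

theorem hard_dir (m : ℕ) (β : ℝ) (x : Fin m → ℂ)
    (hx : (x, (0 : Fin m → ℂ)) ∈ orbitPairClosure m β) :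
    ∀ j : Fin m, m / 2 ≤ (j : ℕ) → x j = 0 := by
  have key : ∀ (k j : ℕ), m ≤ j + k → m / 2 ≤ j → extc m x j = 0 := by
    intro k
    induction k with
    | zero => intro j hj _; exact extc_of_ge x (by omega)
    | succ k ih =>
      intro j hj hj2
      by_cases hjm : m ≤ j
      · exact extc_of_ge x hjm
      · have hB := Bf_self_zero_of_mem m (2 * j) (by omega) β x hx
        rw [Bf, Finset.sum_eq_single_of_mem j (Finset.mem_range.mpr (by omega))] at hB
        · rw [show 2 * j - j = j by omega] at hB
          have h6 : ((-1 : ℂ)) ^ j ≠ 0 := pow_ne_zero _ (by norm_num)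
          rcases mul_eq_zero.mp hB with h | h
          · rcases mul_eq_zero.mp h with h' | h'
            · exact absurd h' h6
            · exact h'
          · exact h
        · intro b hb hbj
          rcases lt_or_gt_of_ne hbj with h | h
          · rw [ih (2 * j - b) (by omega) (by omega), mul_zero]
          · rw [ih b (by omega) (by omega)]
            ring
  intro j hj
  have h := key m (j : ℕ) (by omega) hj
  rw [extc_lt x j.isLt] at h
  simpa using h

end Part5

namespace Part6
open JordanY Part2 Part3 Part4 Matrix

theorem vandermonde' (q l j : ℕ) :
    (q + l).choose j = ∑ i ∈ Finset.range (j + 1), q.choose (j - i) * l.choose i := by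
  rw [Nat.add_choose_eq, Finset.Nat.sum_antidiagonal_eq_sum_range_succ_mk]
  rw [← Finset.sum_range_reflect (fun k => q.choose k * l.choose (j - k)) (j + 1)]
  refine Finset.sum_congr rfl fun i hi => ?_
  have hi' : i < j + 1 := Finset.mem_range.mp hi
  have e1 : j + 1 - 1 - i = j - i := by omega
  rw [e1, show j - (j - i) = i by omega]

noncomputable def Hmat (p q : ℕ) : Matrix (Fin p) (Fin p) ℂ :=
  Matrix.of fun j l => (1 : ℂ) / ((q + (l : ℕ) - (j : ℕ)).factorial : ℂ)

noncomputable def Amat (p q : ℕ) : Matrix (Fin p) (Fin p) ℂ :=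
  Matrix.of fun j i => if (i : ℕ) ≤ (j : ℕ)
    then (((j : ℕ).factorial : ℂ) * (q.choose ((j : ℕ) - (i : ℕ)) : ℂ)) else 0

noncomputable def Bmat (p q : ℕ) : Matrix (Fin p) (Fin p) ℂ :=
  Matrix.of fun i l => ((l : ℕ).choose (i : ℕ) : ℂ) / (((q + (l : ℕ)).factorial : ℂ))

theorem Hmat_factor (p q : ℕ) (hpq : p ≤ q) : Hmat p q = Amat p q * Bmat p q := by
  ext j l
  rw [Matrix.mul_apply]
  have e2 : ∑ i : Fin p, Amat p q j i * Bmat p q i l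
      = ∑ i ∈ Finset.range p, (if i ≤ (j : ℕ) then
          (((j : ℕ).factorial : ℂ) * (q.choose ((j : ℕ) - i) : ℂ) * (((l : ℕ).choose i) : ℂ))
          else 0) / ((q + (l : ℕ)).factorial : ℂ) := by
    rw [← Fin.sum_univ_eq_sum_range]
    refine Finset.sum_congr rfl fun i _ => ?_
    show Amat p q j i * Bmat p q i l = _
    rw [Amat, Bmat]
    simp only [Matrix.of_apply]
    split <;> ring
  rw [e2]
  rw [← Finset.sum_subset (Finset.range_subset_range.mpr (show (j : ℕ) + 1 ≤ p by omega))
    (fun i _ hi => by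
      rw [if_neg (show ¬ i ≤ (j : ℕ) from fun h => hi (Finset.mem_range.mpr (by omega))),
        zero_div])]
  have e3 : ∀ i ∈ Finset.range ((j : ℕ) + 1),
      (if i ≤ (j : ℕ) then
          (((j : ℕ).factorial : ℂ) * (q.choose ((j : ℕ) - i) : ℂ) * (((l : ℕ).choose i) : ℂ))
          else 0) / ((q + (l : ℕ)).factorial : ℂ)
      = ((j : ℕ).factorial : ℂ) * ((q.choose ((j : ℕ) - i) : ℂ) * (((l : ℕ).choose i) : ℂ))
          / ((q + (l : ℕ)).factorial : ℂ) := by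
    intro i hi
    rw [if_pos (show i ≤ (j : ℕ) by have := Finset.mem_range.mp hi; omega)]
    ring
  rw [Finset.sum_congr rfl e3, ← Finset.sum_div, ← Finset.mul_sum]
  have e5 : (∑ i ∈ Finset.range ((j : ℕ) + 1),
      (q.choose ((j : ℕ) - i) : ℂ) * (((l : ℕ).choose i) : ℂ))
      = (((q + (l : ℕ)).choose (j : ℕ)) : ℂ) := by
    exact_mod_cast (congrArg (Nat.cast : ℕ → ℂ) (vandermonde' q (l : ℕ) (j : ℕ))).symm
  rw [e5, Hmat]
  have hle : (j : ℕ) ≤ q + (l : ℕ) := by omega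
  have hfac := Nat.choose_mul_factorial_mul_factorial hle
  have h1 : ((q + (l : ℕ) - (j : ℕ)).factorial : ℂ) ≠ 0 :=
    Nat.cast_ne_zero.mpr (Nat.factorial_ne_zero _)
  have h2 : (((q + (l : ℕ)).factorial : ℂ)) ≠ 0 :=
    Nat.cast_ne_zero.mpr (Nat.factorial_ne_zero _)
  show (1 : ℂ) / _ = _
  rw [div_eq_div_iff h1 h2, one_mul]
  have : ((q + (l : ℕ)).choose (j : ℕ) * (j : ℕ).factorial * (q + (l : ℕ) - (j : ℕ)).factorial : ℂ)
      = ((q + (l : ℕ)).factorial : ℂ) := by exact_mod_cast congrArg (Nat.cast : ℕ → ℂ) hfac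
  rw [← this]
  ring

theorem Hmat_det_isUnit (p q : ℕ) (hpq : p ≤ q) : IsUnit (Hmat p q).det := by
  rw [Hmat_factor p q hpq, Matrix.det_mul]
  have hA : (Amat p q).det = ∏ j : Fin p, ((j : ℕ).factorial : ℂ) := by
    rw [Matrix.det_of_lowerTriangular (Amat p q)
      (fun i j h => by
        rw [Amat]
        exact if_neg (show ¬ (j : ℕ) ≤ (i : ℕ) by
          simp only [OrderDual.toDual_lt_toDual] at h
          exact not_le.mpr (by exact_mod_cast h)))]
    refine Finset.prod_congr rfl fun j _ => ?_
    rw [Amat]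
    simp
  have hB : (Bmat p q).det = ∏ l : Fin p, (1 : ℂ) / (((q + (l : ℕ)).factorial : ℂ)) := by
    rw [Matrix.det_of_upperTriangular
      (show (Bmat p q).BlockTriangular id from fun i j h => by
        rw [Bmat]
        exact div_eq_zero_iff.mpr (Or.inl (by
          norm_cast
          exact Nat.choose_eq_zero_of_lt (by exact_mod_cast h))))]
    refine Finset.prod_congr rfl fun l _ => ?_
    rw [Bmat]
    simp
  rw [hA, hB]
  apply IsUnit.mul
  · exact isUnit_iff_ne_zero.mpr (Finset.prod_ne_zero_iff.mpr fun j _ =>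
      Nat.cast_ne_zero.mpr (Nat.factorial_ne_zero _))
  · exact isUnit_iff_ne_zero.mpr (Finset.prod_ne_zero_iff.mpr fun l _ =>
      one_div_ne_zero (Nat.cast_ne_zero.mpr (Nat.factorial_ne_zero _)))

end Part6

namespace Part7
open JordanY Part2 Part3 Part4 Part6 Matrix Filter

theorem tendsto_pow_mul_inv_pow (a b : ℕ) (h : a < b) :
    Filter.Tendsto (fun t : ℝ => (t : ℂ) ^ a * ((t : ℂ))⁻¹ ^ b) Filter.atTop (nhds 0) := by
  have h1 : Tendsto (fun t : ℝ => ((t : ℂ))⁻¹) atTop (nhds 0) := by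
    have := (Complex.continuous_ofReal.tendsto 0).comp tendsto_inv_atTop_zero
    have h2 : (Complex.ofReal ∘ fun r : ℝ => r⁻¹) = fun t : ℝ => ((t : ℂ))⁻¹ := by
      funext t
      simp [Function.comp, Complex.ofReal_inv]
    rw [h2] at this
    simpa using this
  have h2 : Tendsto (fun t : ℝ => ((t : ℂ))⁻¹ ^ (b - a)) atTop (nhds 0) := by
    have := h1.pow (b - a)
    simpa [zero_pow (show b - a ≠ 0 by omega)] using this
  refine h2.congr' ?_
  filter_upwards [Filter.Ici_mem_atTop (1 : ℝ)] with t ht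
  have ht0 : (t : ℂ) ≠ 0 := by
    simp only [ne_eq, Complex.ofReal_eq_zero]
    intro h0
    rw [h0] at ht
    exact absurd ht (by norm_num)
  have e1 : ((t : ℂ))⁻¹ ^ b = ((t : ℂ))⁻¹ ^ a * ((t : ℂ))⁻¹ ^ (b - a) := by
    rw [← pow_add]
    congr 1
    omega
  calc ((t : ℂ))⁻¹ ^ (b - a)
      = ((t : ℂ) * ((t : ℂ))⁻¹) ^ a * ((t : ℂ))⁻¹ ^ (b - a) := by
        rw [mul_inv_cancel₀ ht0, one_pow, one_mul]
    _ = (t : ℂ) ^ a * ((t : ℂ))⁻¹ ^ b := by rw [e1, mul_pow]; ring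

theorem neg_one_pow_combine (a b : ℕ) (h : b ≤ a) :
    ((-1 : ℂ)) ^ (a - b) * (-1 : ℂ) ^ a = (-1 : ℂ) ^ b := by
  rw [← pow_add, show a - b + a = 2 * (a - b) + b by omega, pow_add, pow_mul]
  simp

theorem pow_mul_inv_pow_cancel {t : ℂ} (ht : t ≠ 0) (a b : ℕ) (h : b ≤ a) :
    t ^ (a - b) * t⁻¹ ^ a = t⁻¹ ^ b := by
  have e1 : t⁻¹ ^ a = t⁻¹ ^ (a - b) * t⁻¹ ^ b := by
    rw [← pow_add]; congr 1; omega
  calc t ^ (a - b) * t⁻¹ ^ a = (t * t⁻¹) ^ (a - b) * t⁻¹ ^ b := by rw [e1, mul_pow]; ring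
  _ = t⁻¹ ^ b := by rw [mul_inv_cancel₀ ht, one_pow, one_mul]

end Part7
namespace Part7
open JordanY Part2 Part3 Part4 Part6 Matrix Filter

noncomputable def orbitSet (m : ℕ) (β : ℝ) : Set ((Fin m → ℂ) × (Fin m → ℂ)) :=
  {q | ∃ (w : Fin m → ℂ) (t : ℝ),
    q = (w, (NormedSpace.exp (t • jordanBlockI m β)).mulVec w)}

theorem easy_dir (m p q : ℕ) (hp : p ≤ q) (hm : q + p = m) (β : ℝ) (x : Fin m → ℂ)
    (hx : ∀ j : Fin m, p ≤ (j : ℕ) → x j = 0) :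
    (x, (0 : Fin m → ℂ)) ∈ orbitPairClosure m β := by
  subst hm
  have hdet : IsUnit (Hmat p q).det := Hmat_det_isUnit p q hp
  set ξ : ℝ → Fin p → ℂ :=
    fun t j => (-1 : ℂ) ^ (j : ℕ) * (t : ℂ) ^ (j : ℕ) * extc (q + p) x (j : ℕ) with hξ
  set cvec : ℝ → Fin p → ℂ := fun t => ((Hmat p q)⁻¹).mulVec (ξ t) with hcvec
  set yvec : ℝ → Fin (q + p) → ℂ := fun t k =>
    if h : q ≤ (k : ℕ) then
      (-1 : ℂ) ^ (k : ℕ) * ((t : ℂ))⁻¹ ^ (k : ℕ) * cvec t ⟨(k : ℕ) - q, by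
        have := k.isLt; omega⟩
    else 0 with hyvec
  set uvec : ℝ → Fin (q + p) → ℂ :=
    fun t => Complex.exp (Complex.I * β * t) • yvec t with huvec
  set wvec : ℝ → Fin (q + p) → ℂ := fun t => (Nexp (q + p) (-(t : ℂ))).mulVec (yvec t) with hwvec
  -- orbit membership
  have horb : ∀ t : ℝ, (wvec t, uvec t) ∈ orbitSet (q + p) β := by
    intro t
    refine ⟨wvec t, t, ?_⟩
    have hNN : Nexp (q + p) ((t : ℂ)) * Nexp (q + p) (-(t : ℂ)) = 1 := by
      have := Nexp_neg_mul_Nexp (q + p) (-t)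
      rw [Complex.ofReal_neg, neg_neg] at this
      exact this
    have : (NormedSpace.exp (t • jordanBlockI (q + p) β)).mulVec (wvec t) = uvec t := by
      rw [hwvec]
      simp only []
      rw [exp_smul_jordan, Matrix.smul_mulVec, Matrix.mulVec_mulVec, hNN,
        Matrix.one_mulVec, huvec]
    rw [this]
  -- closed form for wvec
  have wform : ∀ (t : ℝ) (j : Fin (q + p)), wvec t j
      = ∑ l : Fin p, (if (j : ℕ) ≤ q + (l : ℕ) then
          (-(t : ℂ)) ^ (q + (l : ℕ) - (j : ℕ)) / (((q + (l : ℕ) - (j : ℕ)).factorial : ℂ))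
            * ((-1 : ℂ)) ^ (q + (l : ℕ)) * ((t : ℂ))⁻¹ ^ (q + (l : ℕ)) * cvec t l
        else 0) := by
    intro t j
    rw [hwvec]
    show ∑ k : Fin (q + p), Nexp (q + p) (-(t : ℂ)) j k * yvec t k = _
    rw [Fin.sum_univ_add (fun k : Fin (q + p) => Nexp (q + p) (-(t : ℂ)) j k * yvec t k)]
    have hzero : ∀ a : Fin q,
        Nexp (q + p) (-(t : ℂ)) j (Fin.castAdd p a) * yvec t (Fin.castAdd p a) = 0 := by
      intro a
      have : yvec t (Fin.castAdd p a) = 0 := by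
        rw [hyvec]
        simp only []
        rw [dif_neg]
        simp only [Fin.coe_castAdd]
        omega
      rw [this, mul_zero]
    rw [Finset.sum_congr rfl fun a _ => hzero a, Finset.sum_const_zero, zero_add]
    refine Finset.sum_congr rfl fun l _ => ?_
    have hval : ((Fin.natAdd q l : Fin (q + p)) : ℕ) = q + (l : ℕ) := rfl
    have hy : yvec t (Fin.natAdd q l)
        = (-1 : ℂ) ^ (q + (l : ℕ)) * ((t : ℂ))⁻¹ ^ (q + (l : ℕ)) * cvec t l := by
      rw [hyvec]
      simp only []
      rw [dif_pos (show q ≤ ((Fin.natAdd q l : Fin (q + p)) : ℕ) by rw [hval]; omega)]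
      have hidx : ∀ (hh : ((Fin.natAdd q l : Fin (q + p)) : ℕ) - q < p),
          (⟨((Fin.natAdd q l : Fin (q + p)) : ℕ) - q, hh⟩ : Fin p) = l := fun hh =>
        Fin.ext (by show ((Fin.natAdd q l : Fin (q + p)) : ℕ) - q = (l : ℕ); rw [hval]; omega)
      rw [hidx, hval]
    rw [hy, Nexp_apply, hval]
    by_cases hc : (j : ℕ) ≤ q + (l : ℕ)
    · rw [if_pos hc, if_pos hc]
      ring
    · rw [if_neg hc, if_neg hc, zero_mul]
  -- expansion of cvec
  have hc_exp : ∀ (t : ℝ) (l : Fin p), cvec t l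
      = ∑ i : Fin p, (Hmat p q)⁻¹ l i
          * ((-1 : ℂ) ^ (i : ℕ) * (t : ℂ) ^ (i : ℕ) * extc (q + p) x (i : ℕ)) := by
    intro t l
    rw [hcvec]
    simp only [Matrix.mulVec, dotProduct, hξ]
  -- yvec tends to 0
  have hy0 : ∀ k : Fin (q + p), Tendsto (fun t : ℝ => yvec t k) atTop (nhds 0) := by
    intro k
    by_cases hk : q ≤ (k : ℕ)
    · have hl0 : (k : ℕ) - q < p := by have := k.isLt; omega
      have hform : ∀ t : ℝ, yvec t k = ∑ i : Fin p,
          ((-1 : ℂ) ^ (k : ℕ) * (Hmat p q)⁻¹ ⟨(k : ℕ) - q, hl0⟩ i * (-1 : ℂ) ^ (i : ℕ)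
            * extc (q + p) x (i : ℕ)) * ((t : ℂ) ^ (i : ℕ) * ((t : ℂ))⁻¹ ^ (k : ℕ)) := by
        intro t
        rw [hyvec]
        simp only []
        rw [dif_pos hk, hc_exp, Finset.mul_sum]
        refine Finset.sum_congr rfl fun i _ => ?_
        ring
      rw [tendsto_congr hform]
      have htend : ∀ i : Fin p, Tendsto (fun t : ℝ =>
          ((-1 : ℂ) ^ (k : ℕ) * (Hmat p q)⁻¹ ⟨(k : ℕ) - q, hl0⟩ i * (-1 : ℂ) ^ (i : ℕ)
            * extc (q + p) x (i : ℕ)) * ((t : ℂ) ^ (i : ℕ) * ((t : ℂ))⁻¹ ^ (k : ℕ)))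
          atTop (nhds 0) := by
        intro i
        have h1 := (tendsto_pow_mul_inv_pow (i : ℕ) (k : ℕ) (by have := i.isLt; omega)).const_mul
          ((-1 : ℂ) ^ (k : ℕ) * (Hmat p q)⁻¹ ⟨(k : ℕ) - q, hl0⟩ i * (-1 : ℂ) ^ (i : ℕ)
            * extc (q + p) x (i : ℕ))
        simpa using h1
      have := tendsto_finset_sum (Finset.univ : Finset (Fin p)) (fun i _ => htend i)
      simpa using this
    · have : (fun t : ℝ => yvec t k) = fun _ => 0 := funext fun t => by
        rw [hyvec]; simp only []; rw [dif_neg hk]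
      rw [this]
      exact tendsto_const_nhds
  -- uvec tends to 0
  have hu0 : Tendsto uvec atTop (nhds 0) := by
    rw [tendsto_pi_nhds]
    intro k
    have hform : ∀ t : ℝ, uvec t k = yvec t k * Complex.exp (Complex.I * β * t) := by
      intro t
      rw [huvec]
      simp only [Pi.smul_apply, smul_eq_mul]
      ring
    rw [tendsto_congr hform]
    have hbd : IsBoundedUnder (· ≤ ·) atTop
        (fun t : ℝ => ‖Complex.exp (Complex.I * β * t)‖) := by
      refine isBoundedUnder_of ⟨1, fun t => le_of_eq ?_⟩
      rw [Complex.norm_exp]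
      simp
    exact (hy0 k).zero_mul_isBoundedUnder_le hbd
  -- wvec tends to x
  have hw : Tendsto wvec atTop (nhds x) := by
    rw [tendsto_pi_nhds]
    intro j
    by_cases hj : (j : ℕ) < p
    · -- eventually equal to the constant x j
      have hev : ∀ t : ℝ, t ∈ Set.Ici (1 : ℝ) → wvec t j = x j := by
        intro t ht
        have ht0 : (t : ℂ) ≠ 0 := by
          simp only [ne_eq, Complex.ofReal_eq_zero]
          intro h0; rw [h0] at ht; exact absurd ht (by norm_num)
        rw [wform]
        have hterm : ∀ l : Fin p, (if (j : ℕ) ≤ q + (l : ℕ) then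
            (-(t : ℂ)) ^ (q + (l : ℕ) - (j : ℕ)) / (((q + (l : ℕ) - (j : ℕ)).factorial : ℂ))
              * ((-1 : ℂ)) ^ (q + (l : ℕ)) * ((t : ℂ))⁻¹ ^ (q + (l : ℕ)) * cvec t l
            else 0)
            = ((-1 : ℂ) ^ (j : ℕ) * ((t : ℂ))⁻¹ ^ (j : ℕ))
                * (Hmat p q ⟨(j : ℕ), hj⟩ l * cvec t l) := by
          intro l
          rw [if_pos (by omega : (j : ℕ) ≤ q + (l : ℕ))]
          have e2 : ((-1 : ℂ)) ^ (q + (l : ℕ) - (j : ℕ)) * (-1 : ℂ) ^ (q + (l : ℕ))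
              = (-1 : ℂ) ^ (j : ℕ) := neg_one_pow_combine _ _ (by omega)
          have e3 : (t : ℂ) ^ (q + (l : ℕ) - (j : ℕ)) * ((t : ℂ))⁻¹ ^ (q + (l : ℕ))
              = ((t : ℂ))⁻¹ ^ (j : ℕ) := pow_mul_inv_pow_cancel ht0 _ _ (by omega)
          have e4 : Hmat p q ⟨(j : ℕ), hj⟩ l
              = 1 / (((q + (l : ℕ) - (j : ℕ)).factorial : ℂ)) := rfl
          rw [neg_pow, e4]
          calc (-1 : ℂ) ^ (q + (l : ℕ) - (j : ℕ)) * (t : ℂ) ^ (q + (l : ℕ) - (j : ℕ))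
                / (((q + (l : ℕ) - (j : ℕ)).factorial : ℂ))
                * ((-1 : ℂ)) ^ (q + (l : ℕ)) * ((t : ℂ))⁻¹ ^ (q + (l : ℕ)) * cvec t l
              = (((-1 : ℂ)) ^ (q + (l : ℕ) - (j : ℕ)) * (-1 : ℂ) ^ (q + (l : ℕ)))
                * ((t : ℂ) ^ (q + (l : ℕ) - (j : ℕ)) * ((t : ℂ))⁻¹ ^ (q + (l : ℕ)))
                * (cvec t l / (((q + (l : ℕ) - (j : ℕ)).factorial : ℂ))) := by ring
            _ = ((-1 : ℂ) ^ (j : ℕ) * ((t : ℂ))⁻¹ ^ (j : ℕ))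
                * (1 / (((q + (l : ℕ) - (j : ℕ)).factorial : ℂ)) * cvec t l) := by
                rw [e2, e3]; ring
        rw [Finset.sum_congr rfl fun l _ => hterm l, ← Finset.mul_sum]
        have hmv : (Hmat p q).mulVec (cvec t) = ξ t := by
          rw [hcvec, Matrix.mulVec_mulVec, Matrix.mul_nonsing_inv _ hdet, Matrix.one_mulVec]
        have hsum2 : ∑ l : Fin p, Hmat p q ⟨(j : ℕ), hj⟩ l * cvec t l
            = ξ t ⟨(j : ℕ), hj⟩ := by
          rw [← hmv]
          rfl
        rw [hsum2, hξ]
        simp only []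
        have hXj : extc (q + p) x ((⟨(j : ℕ), hj⟩ : Fin p) : ℕ) = x j := by
          rw [extc_lt x (show ((⟨(j : ℕ), hj⟩ : Fin p) : ℕ) < q + p from j.isLt)]
        have e5 : ((-1 : ℂ)) ^ (j : ℕ) * ((-1 : ℂ)) ^ (j : ℕ) = 1 := by
          rw [← pow_add, ← two_mul, pow_mul]
          norm_num
        have e6 : ((t : ℂ))⁻¹ ^ (j : ℕ) * (t : ℂ) ^ (j : ℕ) = 1 := by
          rw [← mul_pow, inv_mul_cancel₀ ht0, one_pow]
        calc ((-1 : ℂ) ^ (j : ℕ) * ((t : ℂ))⁻¹ ^ (j : ℕ))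
              * ((-1 : ℂ) ^ (((⟨(j : ℕ), hj⟩ : Fin p)) : ℕ)
                * (t : ℂ) ^ (((⟨(j : ℕ), hj⟩ : Fin p)) : ℕ)
                * extc (q + p) x (((⟨(j : ℕ), hj⟩ : Fin p)) : ℕ))
            = (((-1 : ℂ)) ^ (j : ℕ) * ((-1 : ℂ)) ^ (j : ℕ))
              * (((t : ℂ))⁻¹ ^ (j : ℕ) * (t : ℂ) ^ (j : ℕ))
              * extc (q + p) x ((⟨(j : ℕ), hj⟩ : Fin p) : ℕ) := by ring
          _ = x j := by rw [e5, e6, hXj]; ring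
      refine Tendsto.congr' ?_ (tendsto_const_nhds (x := x j))
      filter_upwards [Filter.Ici_mem_atTop (1 : ℝ)] with t ht
      exact (hev t ht).symm
    · -- p ≤ j : the limit is 0 = x j
      have hxj : x j = 0 := hx j (by omega)
      rw [hxj]
      have hwj : ∀ t : ℝ, wvec t j = ∑ l : Fin p, (if (j : ℕ) ≤ q + (l : ℕ) then
          (-(t : ℂ)) ^ (q + (l : ℕ) - (j : ℕ)) / (((q + (l : ℕ) - (j : ℕ)).factorial : ℂ))
            * ((-1 : ℂ)) ^ (q + (l : ℕ)) * ((t : ℂ))⁻¹ ^ (q + (l : ℕ)) * cvec t l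
          else 0) := fun t => wform t j
      rw [tendsto_congr hwj]
      have hterm0 : ∀ l : Fin p, Tendsto (fun t : ℝ => (if (j : ℕ) ≤ q + (l : ℕ) then
          (-(t : ℂ)) ^ (q + (l : ℕ) - (j : ℕ)) / (((q + (l : ℕ) - (j : ℕ)).factorial : ℂ))
            * ((-1 : ℂ)) ^ (q + (l : ℕ)) * ((t : ℂ))⁻¹ ^ (q + (l : ℕ)) * cvec t l
          else 0)) atTop (nhds 0) := by
        intro l
        by_cases hcond : (j : ℕ) ≤ q + (l : ℕ)
        · have hexp2 : ∀ t : ℝ, (if (j : ℕ) ≤ q + (l : ℕ) then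
              (-(t : ℂ)) ^ (q + (l : ℕ) - (j : ℕ)) / (((q + (l : ℕ) - (j : ℕ)).factorial : ℂ))
                * ((-1 : ℂ)) ^ (q + (l : ℕ)) * ((t : ℂ))⁻¹ ^ (q + (l : ℕ)) * cvec t l
              else 0)
              = ∑ i : Fin p,
                ((-1 : ℂ) ^ (q + (l : ℕ) - (j : ℕ))
                  / (((q + (l : ℕ) - (j : ℕ)).factorial : ℂ)) * ((-1 : ℂ)) ^ (q + (l : ℕ))
                  * ((Hmat p q)⁻¹ l i * ((-1 : ℂ) ^ (i : ℕ) * extc (q + p) x (i : ℕ))))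
                * ((t : ℂ) ^ (q + (l : ℕ) - (j : ℕ) + (i : ℕ)) * ((t : ℂ))⁻¹ ^ (q + (l : ℕ))) := by
            intro t
            rw [if_pos hcond, hc_exp, Finset.mul_sum]
            refine Finset.sum_congr rfl fun i _ => ?_
            rw [neg_pow, pow_add]
            ring
          rw [tendsto_congr hexp2]
          have htend2 : ∀ i : Fin p, Tendsto (fun t : ℝ =>
              ((-1 : ℂ) ^ (q + (l : ℕ) - (j : ℕ))
                / (((q + (l : ℕ) - (j : ℕ)).factorial : ℂ)) * ((-1 : ℂ)) ^ (q + (l : ℕ))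
                * ((Hmat p q)⁻¹ l i * ((-1 : ℂ) ^ (i : ℕ) * extc (q + p) x (i : ℕ))))
              * ((t : ℂ) ^ (q + (l : ℕ) - (j : ℕ) + (i : ℕ)) * ((t : ℂ))⁻¹ ^ (q + (l : ℕ))))
              atTop (nhds 0) := by
            intro i
            have hlt : q + (l : ℕ) - (j : ℕ) + (i : ℕ) < q + (l : ℕ) := by
              have := i.isLt; omega
            have h1 := (tendsto_pow_mul_inv_pow _ _ hlt).const_mul
              ((-1 : ℂ) ^ (q + (l : ℕ) - (j : ℕ))
                / (((q + (l : ℕ) - (j : ℕ)).factorial : ℂ)) * ((-1 : ℂ)) ^ (q + (l : ℕ))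
                * ((Hmat p q)⁻¹ l i * ((-1 : ℂ) ^ (i : ℕ) * extc (q + p) x (i : ℕ))))
            simpa using h1
          have := tendsto_finset_sum (Finset.univ : Finset (Fin p)) (fun i _ => htend2 i)
          simpa using this
        · have : (fun t : ℝ => (if (j : ℕ) ≤ q + (l : ℕ) then
              (-(t : ℂ)) ^ (q + (l : ℕ) - (j : ℕ)) / (((q + (l : ℕ) - (j : ℕ)).factorial : ℂ))
                * ((-1 : ℂ)) ^ (q + (l : ℕ)) * ((t : ℂ))⁻¹ ^ (q + (l : ℕ)) * cvec t l
              else 0)) = fun _ => 0 := funext fun t => if_neg hcond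
          rw [this]
          exact tendsto_const_nhds
      have := tendsto_finset_sum (Finset.univ : Finset (Fin p)) (fun l _ => hterm0 l)
      simpa using this
  -- conclude
  have hten : Tendsto (fun t : ℝ => (wvec t, uvec t)) atTop (nhds (x, (0 : Fin (q + p) → ℂ))) :=
    hw.prodMk_nhds hu0
  exact mem_closure_of_tendsto hten (Filter.Eventually.of_forall horb)

end Part7


/-- **Proposition 6.1, operator `Y` on a Jordan block.** For the flow of an `m × m`
(`m ≥ 1`) Jordan block `J` with eigenvalue `iβ`, the set
`{0} ∪ {x : (x, 0) lies in the closure of the set of pairs of points on a common orbit}`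
equals the subspace of vectors supported on the first `⌊m/2⌋` coordinates. -/
theorem Y_of_jordan_orbit_space (m : ℕ) (hm : 1 ≤ m) (β : ℝ) :
    ({0} ∪ {x : Fin m → ℂ | (x, 0) ∈ orbitPairClosure m β} : Set (Fin m → ℂ))
    = {x : Fin m → ℂ | ∀ j : Fin m, m / 2 ≤ (j : ℕ) → x j = 0} := by
  ext x
  simp only [Set.mem_union, Set.mem_singleton_iff, Set.mem_setOf_eq]
  constructor
  · rintro (rfl | hx)
    · intro j _
      rfl
    · exact Part5.hard_dir m β x hx
  · intro hx
    right
    exact Part7.easy_dir m (m / 2) (m - m / 2) (by omega) (by omega) β x hx
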